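/- (Comparison of two competition dynamics) Let $M \ge 2$ and let $Z_1, Z_2$ be random variables taking values in $\{1/M, \dots, (M-1)/M\}$, with $\mu_i = \mathbb{E}[Z_i]$ and $\mu_2 \ge \mu_1$. Set $C_{\mathrm{low}} = \frac{M(e^{\alpha}-1)}{(M-1)e^{\alpha}+1}$, $C_{\mathrm{upp}} = \frac{M(e^{\alpha}-1)}{e^{\alpha}+(M-1)}$, $C_1 = C_{\mathrm{low}}/C_{\mathrm{upp}}$, and $C_2 = -C_1 \mu_1(1-\mu_1) + \frac{\mu_2 - \mu_1}{C_{\mathrm{upp}}} + \mu_2(1-\mu_2)$. If $\alpha > 0$ and $\mathrm{Var}[Z_2] \ge C_1 \mathrm{Var}[Z_1] + C_2$, then $\mathbb{E}\left[\frac{Z_1 e^{\alpha}}{Z_1 e^{\alpha}+(1-Z_1)}\right] \ge \mathbb{E}\left[\frac{Z_2 e^{\alpha}}{Z_2 e^{\alpha}+(1-Z_2)}\right]$. -/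

import Mathlib

open MeasureTheory ProbabilityTheory

lemma kbounds (M : ℕ) (hM : 2 ≤ M) (E : ℝ) (hE : 1 < E) {z : ℝ}
    (hz1 : 1 / (M:ℝ) ≤ z) (hz2 : z ≤ 1 - 1 / (M:ℝ)) :
    (M:ℝ) * (E - 1) / (((M:ℝ) - 1) * E + 1) * (z * (1 - z)) ≤ z * E / (z * E + (1 - z)) - z ∧
    z * E / (z * E + (1 - z)) - z ≤ (M:ℝ) * (E - 1) / (E + ((M:ℝ) - 1)) * (z * (1 - z)) := by
  have hM' : (2:ℝ) ≤ M := by exact_mod_cast hM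
  have hMpos : (0:ℝ) < M := by linarith
  have hz0 : 0 < z := lt_of_lt_of_le (by positivity) hz1
  have hz1' : z < 1 := by
    have h : 0 < 1/(M:ℝ) := by positivity
    linarith
  have hD : 0 < z * E + (1 - z) := by nlinarith
  have hkey : z * E / (z * E + (1 - z)) - z = z * (1 - z) * (E - 1) / (z * E + (1 - z)) := by
    field_simp; ring
  have hs : 0 ≤ z * (1 - z) := by nlinarith
  have hMz : (M:ℝ) * z ≤ (M:ℝ) - 1 := by
    have h := mul_le_mul_of_nonneg_left hz2 (le_of_lt hMpos)
    have h2 : (M:ℝ) * (1 - 1/(M:ℝ)) = (M:ℝ) - 1 := by field_simp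
    linarith
  have hMz' : 1 ≤ (M:ℝ) * z := by
    have h := mul_le_mul_of_nonneg_left hz1 (le_of_lt hMpos)
    have h2 : (M:ℝ) * (1/(M:ℝ)) = 1 := by field_simp
    linarith
  have hden1 : 0 < ((M:ℝ) - 1) * E + 1 := by nlinarith
  have hden2 : 0 < E + ((M:ℝ) - 1) := by nlinarith
  have hE1 : (0:ℝ) ≤ E - 1 := by linarith
  have hMD : (M:ℝ) * (z * E + (1 - z)) ≤ ((M:ℝ) - 1) * E + 1 := by nlinarith
  have hMD2 : E + ((M:ℝ) - 1) ≤ (M:ℝ) * (z * E + (1 - z)) := by nlinarith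
  constructor
  · rw [hkey, div_mul_eq_mul_div, div_le_div_iff₀ hden1 hD]
    nlinarith [mul_le_mul_of_nonneg_left hMD (mul_nonneg hs hE1)]
  · rw [hkey, div_mul_eq_mul_div, div_le_div_iff₀ hD hden2]
    nlinarith [mul_le_mul_of_nonneg_left hMD2 (mul_nonneg hs hE1)]

theorem comparison_of_two_competition_dynamics {Ω : Type*} [MeasurableSpace Ω] (μ : MeasureTheory.Measure Ω)
    [MeasureTheory.IsProbabilityMeasure μ] (M : ℕ) (hM : 2 ≤ M)
    (α : ℝ) (hα : 0 < α)
    (Z₁ Z₂ : Ω → ℝ)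
    (hval₁ : ∀ ω, ∃ j : ℕ, 1 ≤ j ∧ j ≤ M - 1 ∧ Z₁ ω = (j : ℝ) / M)
    (hval₂ : ∀ ω, ∃ j : ℕ, 1 ≤ j ∧ j ≤ M - 1 ∧ Z₂ ω = (j : ℝ) / M)
    (hint₁ : Integrable Z₁ μ) (hint₂ : Integrable Z₂ μ)
    (hL₁ : MemLp Z₁ 2 μ) (hL₂ : MemLp Z₂ 2 μ)
    (hkint₁ : Integrable (fun ω => Z₁ ω * Real.exp α / (Z₁ ω * Real.exp α + (1 - Z₁ ω))) μ)
    (hkint₂ : Integrable (fun ω => Z₂ ω * Real.exp α / (Z₂ ω * Real.exp α + (1 - Z₂ ω))) μ)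
    (hμ : (∫ ω, Z₁ ω ∂μ) ≤ ∫ ω, Z₂ ω ∂μ)
    (hvar : variance Z₂ μ ≥
      ((M : ℝ) * (Real.exp α - 1) / ((M - 1) * Real.exp α + 1)) /
          ((M : ℝ) * (Real.exp α - 1) / (Real.exp α + (M - 1))) * variance Z₁ μ +
        (-(((M : ℝ) * (Real.exp α - 1) / ((M - 1) * Real.exp α + 1)) /
              ((M : ℝ) * (Real.exp α - 1) / (Real.exp α + (M - 1)))) *
            ((∫ ω, Z₁ ω ∂μ) * (1 - ∫ ω, Z₁ ω ∂μ)) +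
          ((∫ ω, Z₂ ω ∂μ) - ∫ ω, Z₁ ω ∂μ) /
            ((M : ℝ) * (Real.exp α - 1) / (Real.exp α + (M - 1))) +
          (∫ ω, Z₂ ω ∂μ) * (1 - ∫ ω, Z₂ ω ∂μ))) :
    (∫ ω, Z₂ ω * Real.exp α / (Z₂ ω * Real.exp α + (1 - Z₂ ω)) ∂μ) ≤
      ∫ ω, Z₁ ω * Real.exp α / (Z₁ ω * Real.exp α + (1 - Z₁ ω)) ∂μ := by
  have hE : 1 < Real.exp α := by
    have := Real.exp_lt_exp.2 hα
    simpa using this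
  set E := Real.exp α with hEdef
  have hM' : (2:ℝ) ≤ M := by exact_mod_cast hM
  set a : ℝ := (M:ℝ) * (E - 1) / (((M:ℝ) - 1) * E + 1) with hadef
  set b : ℝ := (M:ℝ) * (E - 1) / (E + ((M:ℝ) - 1)) with hbdef
  have ha : 0 < a := by
    apply div_pos (by nlinarith) (by nlinarith)
  have hb : 0 < b := by
    apply div_pos (by nlinarith) (by nlinarith)
  have hrange : ∀ (Z : Ω → ℝ), (∀ ω, ∃ j : ℕ, 1 ≤ j ∧ j ≤ M - 1 ∧ Z ω = (j : ℝ) / M) →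
      ∀ ω, 1 / (M:ℝ) ≤ Z ω ∧ Z ω ≤ 1 - 1 / (M:ℝ) := by
    intro Z hval ω
    obtain ⟨j, hj1, hj2, hz⟩ := hval ω
    have hj2' : (j:ℝ) ≤ (M:ℝ) - 1 := by
      have : (j:ℝ) ≤ ((M - 1 : ℕ) : ℝ) := by exact_mod_cast hj2
      rwa [Nat.cast_sub (by omega), Nat.cast_one] at this
    have hj1' : (1:ℝ) ≤ j := by exact_mod_cast hj1
    constructor
    · rw [hz]; exact div_le_div_of_nonneg_right hj1' (by linarith)
    · rw [hz, div_le_iff₀ (by linarith : (0:ℝ) < M)]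
      have : (1 - 1/(M:ℝ)) * M = M - 1 := by field_simp
      linarith
  -- integrability of Z*(1-Z)
  have hsq₁ : Integrable (fun ω => Z₁ ω ^ 2) μ := hL₁.integrable_sq
  have hsq₂ : Integrable (fun ω => Z₂ ω ^ 2) μ := hL₂.integrable_sq
  have hg₁ : Integrable (fun ω => Z₁ ω * (1 - Z₁ ω)) μ := by
    have h := hint₁.sub hsq₁
    refine h.congr (Filter.Eventually.of_forall fun ω => ?_)
    simp only [Pi.sub_apply]; ring
  have hg₂ : Integrable (fun ω => Z₂ ω * (1 - Z₂ ω)) μ := by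
    have h := hint₂.sub hsq₂
    refine h.congr (Filter.Eventually.of_forall fun ω => ?_)
    simp only [Pi.sub_apply]; ring
  -- set means etc
  set m₁ := ∫ ω, Z₁ ω ∂μ with hm1
  set m₂ := ∫ ω, Z₂ ω ∂μ with hm2
  -- integral of g
  have hg1eq : (∫ ω, Z₁ ω * (1 - Z₁ ω) ∂μ) = m₁ * (1 - m₁) - variance Z₁ μ := by
    have h1 : (∫ ω, Z₁ ω * (1 - Z₁ ω) ∂μ) = (∫ ω, Z₁ ω ∂μ) - ∫ ω, Z₁ ω ^ 2 ∂μ := by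
      rw [← integral_sub hint₁ hsq₁]
      congr 1; funext ω; ring
    have h2 := variance_eq_sub hL₁
    simp only [Pi.pow_apply] at h2
    rw [h1, h2]; ring
  have hg2eq : (∫ ω, Z₂ ω * (1 - Z₂ ω) ∂μ) = m₂ * (1 - m₂) - variance Z₂ μ := by
    have h1 : (∫ ω, Z₂ ω * (1 - Z₂ ω) ∂μ) = (∫ ω, Z₂ ω ∂μ) - ∫ ω, Z₂ ω ^ 2 ∂μ := by
      rw [← integral_sub hint₂ hsq₂]
      congr 1; funext ω; ring
    have h2 := variance_eq_sub hL₂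
    simp only [Pi.pow_apply] at h2
    rw [h1, h2]; ring
  -- lower bound for Z₁
  have hI1 : m₁ + a * (∫ ω, Z₁ ω * (1 - Z₁ ω) ∂μ) ≤
      ∫ ω, Z₁ ω * E / (Z₁ ω * E + (1 - Z₁ ω)) ∂μ := by
    have hmono := integral_mono (hint₁.add (hg₁.const_mul a)) hkint₁
      (fun ω => by
        have hr := hrange Z₁ hval₁ ω
        have hk := (kbounds M hM E hE hr.1 hr.2).1
        simp only [Pi.add_apply]
        linarith)
    simp only [Pi.add_apply] at hmono
    rwa [integral_add hint₁ (hg₁.const_mul a), integral_const_mul] at hmono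
  -- upper bound for Z₂
  have hI2 : (∫ ω, Z₂ ω * E / (Z₂ ω * E + (1 - Z₂ ω)) ∂μ) ≤
      m₂ + b * (∫ ω, Z₂ ω * (1 - Z₂ ω) ∂μ) := by
    have hmono := integral_mono hkint₂ (hint₂.add (hg₂.const_mul b))
      (fun ω => by
        have hr := hrange Z₂ hval₂ ω
        have hk := (kbounds M hM E hE hr.1 hr.2).2
        simp only [Pi.add_apply]
        linarith)
    simp only [Pi.add_apply] at hmono
    rwa [integral_add hint₂ (hg₂.const_mul b), integral_const_mul] at hmono
  -- variance inequality, cleared of divisions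
  have hvar' : a * variance Z₁ μ - a * (m₁ * (1 - m₁)) + (m₂ - m₁) + b * (m₂ * (1 - m₂)) ≤
      b * variance Z₂ μ := by
    rw [ge_iff_le] at hvar
    have h := mul_le_mul_of_nonneg_left hvar hb.le
    have hbne : b ≠ 0 := ne_of_gt hb
    rw [mul_add, mul_add, mul_add] at h
    have e1 : b * (a / b * variance Z₁ μ) = a * variance Z₁ μ := by
      field_simp
    have e2 : b * (-(a / b) * (m₁ * (1 - m₁))) = -(a * (m₁ * (1 - m₁))) := by
      field_simp
    have e3 : b * ((m₂ - m₁) / b) = m₂ - m₁ := by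
      field_simp
    rw [e1, e2, e3] at h
    linarith
  rw [hg1eq] at hI1
  rw [hg2eq] at hI2
  have expand1 : a * (m₁ * (1 - m₁) - variance Z₁ μ) =
      a * (m₁ * (1 - m₁)) - a * variance Z₁ μ := by ring
  have expand2 : b * (m₂ * (1 - m₂) - variance Z₂ μ) =
      b * (m₂ * (1 - m₂)) - b * variance Z₂ μ := by ring
  rw [expand1] at hI1
  rw [expand2] at hI2
  linarith
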